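/- Let (H, m, Φ) be a cocommutative weak twisted post-Hopf algebra over a field k with μ̄(a ⊗ b) := Φ(a₁)·m(a₂ ⊗ b) satisfying μ̄(1 ⊗ a) = a, and let S : H → H be a coalgebra morphism such that μ̄(a₁ ⊗ S(a₂)) = ε(a)·1 for all a ∈ H. Then S(S(a)) = Φ(a) for all a ∈ H. -/

import Mathlib

open TensorProduct

set_option maxHeartbeats 1000000
set_option synthInstance.maxHeartbeats 200000

noncomputable def mbar (k : Type*) {H : Type*} [Field k] [Ring H] [HopfAlgebra k H]
    (Φ : H →ₗ[k] H) (m : H ⊗[k] H →ₗ[k] H) : H ⊗[k] H →ₗ[k] H :=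
  (LinearMap.mul' k H) ∘ₗ (TensorProduct.map Φ m) ∘ₗ
    (TensorProduct.assoc k H H H).toLinearMap ∘ₗ
    (TensorProduct.map Coalgebra.comul LinearMap.id)

namespace Stmt14Aux

open Coalgebra HopfAlgebra

variable {k H : Type*} [Field k] [Ring H] [HopfAlgebra k H]
variable (m : H ⊗[k] H →ₗ[k] H) (Φ : H →ₗ[k] H)
variable {ι ι₁ ι₂ : Type*}

/-! ### Generalities -/

lemma mbar_tmul (a b : H) (r : Coalgebra.Repr k a ι) :
    mbar k Φ m (a ⊗ₜ[k] b) = ∑ i ∈ r.index, Φ (r.left i) * m (r.right i ⊗ₜ[k] b) := by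
  unfold mbar
  simp only [LinearMap.comp_apply, LinearEquiv.coe_coe, map_tmul, LinearMap.id_coe, id_eq]
  rw [← r.eq, TensorProduct.sum_tmul, map_sum, map_sum, map_sum]
  simp [LinearMap.mul'_apply]

lemma sum_counit_smul (a : H) (r : Coalgebra.Repr k a ι) :
    ∑ i ∈ r.index, counit (R := k) (r.left i) • r.right i = a := by
  calc ∑ i ∈ r.index, counit (R := k) (r.left i) • r.right i
      = TensorProduct.lid k H (∑ i ∈ r.index, counit (R := k) (r.left i) ⊗ₜ[k] r.right i) := by
        rw [map_sum]; simp
    _ = a := by rw [Coalgebra.sum_counit_tmul_eq]; simp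

lemma sum_smul_counit (a : H) (r : Coalgebra.Repr k a ι) :
    ∑ i ∈ r.index, counit (R := k) (r.right i) • r.left i = a := by
  calc ∑ i ∈ r.index, counit (R := k) (r.right i) • r.left i
      = TensorProduct.rid k H (∑ i ∈ r.index, r.left i ⊗ₜ[k] counit (R := k) (r.right i)) := by
        rw [map_sum]; simp
    _ = a := by rw [Coalgebra.sum_tmul_counit_eq]; simp

/-! ### Pointwise forms of the hypotheses -/

lemma comul_m
    (hm_comul : Coalgebra.comul ∘ₗ m
      = (TensorProduct.map m m) ∘ₗ (TensorProduct.tensorTensorTensorComm k H H H H).toLinearMap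
          ∘ₗ (TensorProduct.map Coalgebra.comul Coalgebra.comul))
    (x y : H) (rx : Coalgebra.Repr k x ι) (ry : Coalgebra.Repr k y ι₁) :
    Coalgebra.comul (R := k) (m (x ⊗ₜ[k] y))
      = ∑ i ∈ rx.index, ∑ j ∈ ry.index,
          m (rx.left i ⊗ₜ[k] ry.left j) ⊗ₜ[k] m (rx.right i ⊗ₜ[k] ry.right j) := by
  have h := LinearMap.congr_fun hm_comul (x ⊗ₜ[k] y)
  simp only [LinearMap.comp_apply, LinearEquiv.coe_coe, map_tmul] at h
  rw [h, ← rx.eq, ← ry.eq, TensorProduct.sum_tmul]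
  rw [map_sum, map_sum]
  refine Finset.sum_congr rfl fun i _ => ?_
  rw [TensorProduct.tmul_sum, map_sum, map_sum]
  refine Finset.sum_congr rfl fun j _ => ?_
  simp

lemma comul_Phi
    (hΦ_comul : Coalgebra.comul ∘ₗ Φ = TensorProduct.map Φ Φ ∘ₗ Coalgebra.comul)
    (x : H) (rx : Coalgebra.Repr k x ι) :
    Coalgebra.comul (R := k) (Φ x) = ∑ j ∈ rx.index, Φ (rx.left j) ⊗ₜ[k] Φ (rx.right j) := by
  have h := LinearMap.congr_fun hΦ_comul x
  simp only [LinearMap.comp_apply] at h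
  rw [h, ← rx.eq, map_sum]
  simp

lemma h3_pointwise
    (h3 : Φ ∘ₗ mbar k Φ m = mbar k Φ m ∘ₗ TensorProduct.map LinearMap.id Φ)
    (x y : H) :
    Φ (mbar k Φ m (x ⊗ₜ[k] y)) = mbar k Φ m (x ⊗ₜ[k] Φ y) := by
  have h := LinearMap.congr_fun h3 (x ⊗ₜ[k] y)
  simpa using h

lemma h4_pointwise
    (h4 : m ∘ₗ TensorProduct.map LinearMap.id m
      = m ∘ₗ TensorProduct.map (mbar k Φ m) LinearMap.id ∘ₗ
          (TensorProduct.assoc k H H H).symm.toLinearMap)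
    (x y z : H) :
    m (x ⊗ₜ[k] m (y ⊗ₜ[k] z)) = m (mbar k Φ m (x ⊗ₜ[k] y) ⊗ₜ[k] z) := by
  have h := LinearMap.congr_fun h4 (x ⊗ₜ[k] (y ⊗ₜ[k] z))
  simpa using h

lemma h5_pointwise
    (h5 : m ∘ₗ TensorProduct.map LinearMap.id (LinearMap.mul' k H)
      = (LinearMap.mul' k H) ∘ₗ TensorProduct.map m m ∘ₗ
          (TensorProduct.tensorTensorTensorComm k H H H H).toLinearMap ∘ₗ
          TensorProduct.map Coalgebra.comul LinearMap.id)
    (x u v : H) (rx : Coalgebra.Repr k x ι) :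
    m (x ⊗ₜ[k] (u * v)) = ∑ i ∈ rx.index, m (rx.left i ⊗ₜ[k] u) * m (rx.right i ⊗ₜ[k] v) := by
  have h := LinearMap.congr_fun h5 (x ⊗ₜ[k] (u ⊗ₜ[k] v))
  simp only [LinearMap.comp_apply, LinearEquiv.coe_coe, map_tmul, LinearMap.id_coe, id_eq,
    LinearMap.mul'_apply] at h
  rw [h, ← rx.eq, TensorProduct.sum_tmul, map_sum, map_sum, map_sum]
  refine Finset.sum_congr rfl fun i _ => ?_
  simp

/-! ### Step 1 : `m (a ⊗ 1) = ε a • 1` -/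

noncomputable def nmap : H →ₗ[k] H := m ∘ₗ ((TensorProduct.mk k H H).flip 1)

lemma nmap_apply (x : H) : nmap m x = m (x ⊗ₜ[k] 1) := rfl

lemma comul_nmap
    (hm_comul : Coalgebra.comul ∘ₗ m
      = (TensorProduct.map m m) ∘ₗ (TensorProduct.tensorTensorTensorComm k H H H H).toLinearMap
          ∘ₗ (TensorProduct.map Coalgebra.comul Coalgebra.comul))
    (x : H) (rx : Coalgebra.Repr k x ι) :
    Coalgebra.comul (R := k) (nmap m x)
      = ∑ i ∈ rx.index, nmap m (rx.left i) ⊗ₜ[k] nmap m (rx.right i) := by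
  have h1 : Coalgebra.comul (R := k) (1 : H) = (1 : H) ⊗ₜ[k] (1 : H) := by
    simp [Algebra.TensorProduct.one_def]
  have hr1 : ∑ _i ∈ (Finset.univ : Finset Unit), (1 : H) ⊗ₜ[k] (1 : H)
      = Coalgebra.comul (R := k) (1 : H) := by simp [h1]
  have := comul_m m hm_comul x 1 rx ⟨Finset.univ, fun _ => 1, fun _ => 1, hr1⟩
  simpa [nmap_apply] using this

lemma nmap_conv
    (h5 : m ∘ₗ TensorProduct.map LinearMap.id (LinearMap.mul' k H)
      = (LinearMap.mul' k H) ∘ₗ TensorProduct.map m m ∘ₗ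
          (TensorProduct.tensorTensorTensorComm k H H H H).toLinearMap ∘ₗ
          TensorProduct.map Coalgebra.comul LinearMap.id)
    (x : H) (rx : Coalgebra.Repr k x ι) :
    nmap m x = ∑ i ∈ rx.index, nmap m (rx.left i) * nmap m (rx.right i) := by
  have := h5_pointwise m h5 x 1 1 rx
  simpa [nmap_apply] using this

lemma counit_nmap
    (hm_counit : Coalgebra.counit ∘ₗ m
      = (TensorProduct.lid k k).toLinearMap ∘ₗ
          TensorProduct.map Coalgebra.counit Coalgebra.counit)
    (x : H) : counit (R := k) (nmap m x) = counit (R := k) x := by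
  have h := LinearMap.congr_fun hm_counit (x ⊗ₜ[k] (1 : H))
  simp only [LinearMap.comp_apply, LinearEquiv.coe_coe, map_tmul, lid_tmul] at h
  rw [nmap_apply, h]
  simp [Bialgebra.counit_one]

lemma antipode_nmap
    (hm_comul : Coalgebra.comul ∘ₗ m
      = (TensorProduct.map m m) ∘ₗ (TensorProduct.tensorTensorTensorComm k H H H H).toLinearMap
          ∘ₗ (TensorProduct.map Coalgebra.comul Coalgebra.comul))
    (hm_counit : Coalgebra.counit ∘ₗ m
      = (TensorProduct.lid k k).toLinearMap ∘ₗ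
          TensorProduct.map Coalgebra.counit Coalgebra.counit)
    (x : H) (rx : Coalgebra.Repr k x ι) :
    ∑ i ∈ rx.index, antipode (R := k) (nmap m (rx.left i)) * nmap m (rx.right i)
      = counit (R := k) x • (1 : H) := by
  have h2 := sum_antipode_mul_eq_smul (R := k)
    (⟨rx.index, fun i => nmap m (rx.left i), fun i => nmap m (rx.right i),
      (comul_nmap m hm_comul x rx).symm⟩ : Coalgebra.Repr k (nmap m x) ι)
  simpa [counit_nmap m hm_counit] using h2

lemma nmap_eq_counit
    (hm_comul : Coalgebra.comul ∘ₗ m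
      = (TensorProduct.map m m) ∘ₗ (TensorProduct.tensorTensorTensorComm k H H H H).toLinearMap
          ∘ₗ (TensorProduct.map Coalgebra.comul Coalgebra.comul))
    (hm_counit : Coalgebra.counit ∘ₗ m
      = (TensorProduct.lid k k).toLinearMap ∘ₗ
          TensorProduct.map Coalgebra.counit Coalgebra.counit)
    (h5 : m ∘ₗ TensorProduct.map LinearMap.id (LinearMap.mul' k H)
      = (LinearMap.mul' k H) ∘ₗ TensorProduct.map m m ∘ₗ
          (TensorProduct.tensorTensorTensorComm k H H H H).toLinearMap ∘ₗ
          TensorProduct.map Coalgebra.comul LinearMap.id)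
    (x : H) : nmap m x = counit (R := k) x • (1 : H) := by
  classical
  set r := ℛ k x with hrdef
  set r1 : (i : r.ι) → Coalgebra.Repr k (r.left i) (H × H) := fun i => ℛ k (r.left i) with hr1
  set r2 : (i : r.ι) → Coalgebra.Repr k (r.right i) (H × H) := fun i => ℛ k (r.right i) with hr2
  set Q : H ⊗[k] (H ⊗[k] H) →ₗ[k] H :=
    LinearMap.mul' k H ∘ₗ TensorProduct.map ((antipode (R := k) (A := H)) ∘ₗ nmap m)
      (LinearMap.mul' k H ∘ₗ TensorProduct.map (nmap m) (nmap m)) with hQ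
  have hQap : ∀ x y z : H, Q (x ⊗ₜ[k] (y ⊗ₜ[k] z))
      = antipode (R := k) (nmap m x) * (nmap m y * nmap m z) := by
    intro x y z; simp [hQ]
  have step1 : nmap m x = ∑ i ∈ r.index, counit (R := k) (r.left i) • nmap m (r.right i) := by
    conv_lhs => rw [← sum_counit_smul (k := k) x r]
    rw [map_sum]
    simp
  have key := Coalgebra.sum_tmul_tmul_eq (R := k) r r1 r2
  have keyQ := congrArg Q key
  simp only [map_sum, hQap] at keyQ
  calc nmap m x
      = ∑ i ∈ r.index, counit (R := k) (r.left i) • nmap m (r.right i) := step1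
    _ = ∑ i ∈ r.index, (counit (R := k) (r.left i) • (1 : H)) * nmap m (r.right i) := by
        refine Finset.sum_congr rfl fun i _ => ?_
        rw [smul_mul_assoc, one_mul]
    _ = ∑ i ∈ r.index, (∑ j ∈ (r1 i).index,
          antipode (R := k) (nmap m ((r1 i).left j)) * nmap m ((r1 i).right j))
            * nmap m (r.right i) := by
        refine Finset.sum_congr rfl fun i _ => ?_
        rw [antipode_nmap m hm_comul hm_counit (r.left i) (r1 i)]
    _ = ∑ i ∈ r.index, ∑ j ∈ (r1 i).index,
          antipode (R := k) (nmap m ((r1 i).left j)) * (nmap m ((r1 i).right j)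
            * nmap m (r.right i)) := by
        refine Finset.sum_congr rfl fun i _ => ?_
        rw [Finset.sum_mul]
        exact Finset.sum_congr rfl fun j _ => mul_assoc _ _ _
    _ = ∑ i ∈ r.index, ∑ j ∈ (r2 i).index,
          antipode (R := k) (nmap m (r.left i)) * (nmap m ((r2 i).left j)
            * nmap m ((r2 i).right j)) := keyQ
    _ = ∑ i ∈ r.index, antipode (R := k) (nmap m (r.left i)) * nmap m (r.right i) := by
        refine Finset.sum_congr rfl fun i _ => ?_
        rw [← Finset.mul_sum, ← nmap_conv m h5 (r.right i) (r2 i)]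
    _ = counit (R := k) x • (1 : H) := antipode_nmap m hm_comul hm_counit x r

lemma mbar_one_right
    (hm_comul : Coalgebra.comul ∘ₗ m
      = (TensorProduct.map m m) ∘ₗ (TensorProduct.tensorTensorTensorComm k H H H H).toLinearMap
          ∘ₗ (TensorProduct.map Coalgebra.comul Coalgebra.comul))
    (hm_counit : Coalgebra.counit ∘ₗ m
      = (TensorProduct.lid k k).toLinearMap ∘ₗ
          TensorProduct.map Coalgebra.counit Coalgebra.counit)
    (h5 : m ∘ₗ TensorProduct.map LinearMap.id (LinearMap.mul' k H)
      = (LinearMap.mul' k H) ∘ₗ TensorProduct.map m m ∘ₗ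
          (TensorProduct.tensorTensorTensorComm k H H H H).toLinearMap ∘ₗ
          TensorProduct.map Coalgebra.comul LinearMap.id)
    (a : H) : mbar k Φ m (a ⊗ₜ[k] 1) = Φ a := by
  classical
  set r := ℛ k a with hrdef
  rw [mbar_tmul m Φ a 1 r]
  calc ∑ i ∈ r.index, Φ (r.left i) * m (r.right i ⊗ₜ[k] 1)
      = ∑ i ∈ r.index, counit (R := k) (r.right i) • Φ (r.left i) := by
        refine Finset.sum_congr rfl fun i _ => ?_
        rw [← nmap_apply, nmap_eq_counit m hm_comul hm_counit h5, mul_smul_comm, mul_one]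
    _ = Φ (∑ i ∈ r.index, counit (R := k) (r.right i) • r.left i) := by
        rw [map_sum]; simp
    _ = Φ a := by rw [sum_smul_counit]

/-! ### Cocommutativity shuffles -/

lemma swap_pair (hcoc : ∀ a : H, (TensorProduct.comm k H H) (Coalgebra.comul (R := k) a)
      = Coalgebra.comul a) (x : H) (rx : Coalgebra.Repr k x ι) :
    ∑ j ∈ rx.index, rx.right j ⊗ₜ[k] rx.left j
      = ∑ j ∈ rx.index, rx.left j ⊗ₜ[k] rx.right j := by
  have h1 : ∑ j ∈ rx.index, rx.right j ⊗ₜ[k] rx.left j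
      = TensorProduct.comm k H H (∑ j ∈ rx.index, rx.left j ⊗ₜ[k] rx.right j) := by
    rw [map_sum]; simp
  rw [h1, rx.eq, hcoc, ← rx.eq]

lemma leftComm_lTensor_comul
    (hcoc : ∀ a : H, (TensorProduct.comm k H H) (Coalgebra.comul (R := k) a)
      = Coalgebra.comul a) (x : H) :
    (TensorProduct.leftComm k H H H)
        ((Coalgebra.comul (R := k) (A := H)).lTensor H (Coalgebra.comul x))
      = (Coalgebra.comul (R := k) (A := H)).lTensor H (Coalgebra.comul x) := by
  classical
  set r := ℛ k x with hr
  set r1 : (i : r.ι) → Coalgebra.Repr k (r.left i) (H × H) := fun i => ℛ k (r.left i) with hr1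
  have hE : (Coalgebra.comul (R := k) (A := H)).lTensor H (Coalgebra.comul x)
      = ∑ i ∈ r.index, ∑ j ∈ (r1 i).index,
          (r1 i).left j ⊗ₜ[k] ((r1 i).right j ⊗ₜ[k] r.right i) := by
    rw [← Coalgebra.coassoc_apply x]
    nth_rewrite 1 [← r.eq]
    rw [map_sum, map_sum]
    refine Finset.sum_congr rfl fun i _ => ?_
    rw [LinearMap.rTensor_tmul, ← (r1 i).eq, TensorProduct.sum_tmul, map_sum]
    refine Finset.sum_congr rfl fun j _ => ?_
    simp
  rw [hE, map_sum]
  refine Finset.sum_congr rfl fun i _ => ?_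
  rw [map_sum]
  simp only [leftComm_tmul]
  have hswap := swap_pair hcoc (r.left i) (r1 i)
  have := congrArg ((TensorProduct.assoc k H H H).toLinearMap ∘ₗ
      ((TensorProduct.mk k (H ⊗[k] H) H).flip (r.right i))) hswap
  simpa [map_sum] using this

lemma midswap
    (hcoc : ∀ a : H, (TensorProduct.comm k H H) (Coalgebra.comul (R := k) a)
      = Coalgebra.comul a)
    (a : H) (r : Coalgebra.Repr k a ι)
    (r1 : (i : r.ι) → Coalgebra.Repr k (r.left i) ι₁)
    (r2 : (i : r.ι) → Coalgebra.Repr k (r.right i) ι₂) :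
    ∑ i ∈ r.index, ∑ j ∈ (r1 i).index, ∑ q ∈ (r2 i).index,
        (r1 i).left j ⊗ₜ[k] ((r2 i).left q ⊗ₜ[k] ((r1 i).right j ⊗ₜ[k] (r2 i).right q))
      = ∑ i ∈ r.index, ∑ j ∈ (r1 i).index, ∑ q ∈ (r2 i).index,
        (r1 i).left j ⊗ₜ[k] ((r1 i).right j ⊗ₜ[k] ((r2 i).left q ⊗ₜ[k] (r2 i).right q)) := by
  classical
  have key := Coalgebra.sum_tmul_tmul_eq (R := k) r r1 r2
  have e2a : ∑ i ∈ r.index, ∑ j ∈ (r1 i).index, ∑ q ∈ (r2 i).index,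
        (r1 i).left j ⊗ₜ[k] ((r1 i).right j ⊗ₜ[k] ((r2 i).left q ⊗ₜ[k] (r2 i).right q))
      = ∑ i ∈ r.index, r.left i ⊗ₜ[k]
          ((Coalgebra.comul (R := k) (A := H)).lTensor H (Coalgebra.comul (r.right i))) := by
    have h1 : ∑ i ∈ r.index, ∑ j ∈ (r1 i).index, ∑ q ∈ (r2 i).index,
          (r1 i).left j ⊗ₜ[k] ((r1 i).right j ⊗ₜ[k] ((r2 i).left q ⊗ₜ[k] (r2 i).right q))
        = (((Coalgebra.comul (R := k) (A := H)).lTensor H).lTensor H)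
            (∑ i ∈ r.index, ∑ j ∈ (r1 i).index,
              (r1 i).left j ⊗ₜ[k] ((r1 i).right j ⊗ₜ[k] r.right i)) := by
      rw [map_sum]
      refine Finset.sum_congr rfl fun i _ => ?_
      rw [map_sum]
      refine Finset.sum_congr rfl fun j _ => ?_
      rw [LinearMap.lTensor_tmul, LinearMap.lTensor_tmul, ← (r2 i).eq, tmul_sum, tmul_sum]
    rw [h1, key, map_sum]
    refine Finset.sum_congr rfl fun i _ => ?_
    rw [map_sum]
    conv_rhs => rw [← (r2 i).eq, map_sum, tmul_sum]
    refine Finset.sum_congr rfl fun q _ => ?_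
    simp
  have e1 : ∑ i ∈ r.index, ∑ j ∈ (r1 i).index, ∑ q ∈ (r2 i).index,
        (r1 i).left j ⊗ₜ[k] ((r2 i).left q ⊗ₜ[k] ((r1 i).right j ⊗ₜ[k] (r2 i).right q))
      = ((TensorProduct.leftComm k H H H).toLinearMap.lTensor H)
          (∑ i ∈ r.index, ∑ j ∈ (r1 i).index, ∑ q ∈ (r2 i).index,
            (r1 i).left j ⊗ₜ[k] ((r1 i).right j ⊗ₜ[k] ((r2 i).left q ⊗ₜ[k] (r2 i).right q))) := by
    rw [map_sum]
    refine Finset.sum_congr rfl fun i _ => ?_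
    rw [map_sum]
    refine Finset.sum_congr rfl fun j _ => ?_
    rw [map_sum]
    refine Finset.sum_congr rfl fun q _ => ?_
    simp
  rw [e1, e2a, map_sum]
  refine Finset.sum_congr rfl fun i _ => ?_
  rw [LinearMap.lTensor_tmul]
  congr 1
  exact leftComm_lTensor_comul hcoc (r.right i)

/-! ### `mbar` is a coalgebra morphism -/

lemma comul_mbar
    (hm_comul : Coalgebra.comul ∘ₗ m
      = (TensorProduct.map m m) ∘ₗ (TensorProduct.tensorTensorTensorComm k H H H H).toLinearMap
          ∘ₗ (TensorProduct.map Coalgebra.comul Coalgebra.comul))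
    (hΦ_comul : Coalgebra.comul ∘ₗ Φ = TensorProduct.map Φ Φ ∘ₗ Coalgebra.comul)
    (hcoc : ∀ a : H, (TensorProduct.comm k H H) (Coalgebra.comul (R := k) a)
      = Coalgebra.comul a)
    (a b : H) (r : Coalgebra.Repr k a ι) (rb : Coalgebra.Repr k b ι₁) :
    Coalgebra.comul (R := k) (mbar k Φ m (a ⊗ₜ[k] b))
      = ∑ i ∈ r.index, ∑ p ∈ rb.index,
          mbar k Φ m (r.left i ⊗ₜ[k] rb.left p) ⊗ₜ[k] mbar k Φ m (r.right i ⊗ₜ[k] rb.right p) := by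
  classical
  set r1 : (i : r.ι) → Coalgebra.Repr k (r.left i) (H × H) := fun i => ℛ k (r.left i) with hr1
  set r2 : (i : r.ι) → Coalgebra.Repr k (r.right i) (H × H) := fun i => ℛ k (r.right i) with hr2
  set Ψ : rb.ι → (H ⊗[k] (H ⊗[k] (H ⊗[k] H))) →ₗ[k] H ⊗[k] H := fun p =>
    (TensorProduct.map
      (LinearMap.mul' k H ∘ₗ TensorProduct.map Φ (m ∘ₗ (TensorProduct.mk k H H).flip (rb.left p)))
      (LinearMap.mul' k H ∘ₗ TensorProduct.map Φ (m ∘ₗ (TensorProduct.mk k H H).flip (rb.right p))))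
      ∘ₗ (TensorProduct.assoc k H H (H ⊗[k] H)).symm.toLinearMap with hΨ
  have hΨap : ∀ (p : rb.ι) (x y z w : H), Ψ p (x ⊗ₜ[k] (y ⊗ₜ[k] (z ⊗ₜ[k] w)))
      = (Φ x * m (y ⊗ₜ[k] rb.left p)) ⊗ₜ[k] (Φ z * m (w ⊗ₜ[k] rb.right p)) := by
    intro p x y z w
    simp [hΨ, TensorProduct.assoc_symm_tmul]
  have stepA : Coalgebra.comul (R := k) (mbar k Φ m (a ⊗ₜ[k] b))
      = ∑ i ∈ r.index, ∑ j ∈ (r1 i).index, ∑ q ∈ (r2 i).index, ∑ p ∈ rb.index,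
          Ψ p ((r1 i).left j ⊗ₜ[k] ((r2 i).left q ⊗ₜ[k] ((r1 i).right j ⊗ₜ[k] (r2 i).right q))) := by
    rw [mbar_tmul m Φ a b r, map_sum]
    refine Finset.sum_congr rfl fun i _ => ?_
    rw [Bialgebra.comul_mul, comul_Phi Φ hΦ_comul (r.left i) (r1 i),
      comul_m m hm_comul (r.right i) b (r2 i) rb, Finset.sum_mul_sum]
    refine Finset.sum_congr rfl fun j _ => ?_
    refine Finset.sum_congr rfl fun q _ => ?_
    rw [Finset.mul_sum]
    refine Finset.sum_congr rfl fun p _ => ?_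
    rw [hΨap, Algebra.TensorProduct.tmul_mul_tmul]
  have stepB : ∑ i ∈ r.index, ∑ j ∈ (r1 i).index, ∑ q ∈ (r2 i).index, ∑ p ∈ rb.index,
          Ψ p ((r1 i).left j ⊗ₜ[k] ((r2 i).left q ⊗ₜ[k] ((r1 i).right j ⊗ₜ[k] (r2 i).right q)))
      = ∑ p ∈ rb.index, ∑ i ∈ r.index, ∑ j ∈ (r1 i).index, ∑ q ∈ (r2 i).index,
          Ψ p ((r1 i).left j ⊗ₜ[k] ((r2 i).left q ⊗ₜ[k] ((r1 i).right j ⊗ₜ[k] (r2 i).right q))) := by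
    symm
    rw [Finset.sum_comm]
    refine Finset.sum_congr rfl fun i _ => ?_
    rw [Finset.sum_comm]
    refine Finset.sum_congr rfl fun j _ => ?_
    rw [Finset.sum_comm]
  have stepC : ∑ p ∈ rb.index, ∑ i ∈ r.index, ∑ j ∈ (r1 i).index, ∑ q ∈ (r2 i).index,
          Ψ p ((r1 i).left j ⊗ₜ[k] ((r2 i).left q ⊗ₜ[k] ((r1 i).right j ⊗ₜ[k] (r2 i).right q)))
      = ∑ p ∈ rb.index, ∑ i ∈ r.index, ∑ j ∈ (r1 i).index, ∑ q ∈ (r2 i).index,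
          Ψ p ((r1 i).left j ⊗ₜ[k] ((r1 i).right j ⊗ₜ[k] ((r2 i).left q ⊗ₜ[k] (r2 i).right q))) := by
    refine Finset.sum_congr rfl fun p _ => ?_
    have e1 := congrArg (Ψ p) (midswap hcoc a r r1 r2)
    simpa only [map_sum] using e1
  rw [stepA, stepB, stepC]
  rw [Finset.sum_comm]
  refine Finset.sum_congr rfl fun i _ => ?_
  refine Finset.sum_congr rfl fun p _ => ?_
  rw [mbar_tmul m Φ (r.left i) (rb.left p) (r1 i),
    mbar_tmul m Φ (r.right i) (rb.right p) (r2 i), TensorProduct.sum_tmul]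
  refine Finset.sum_congr rfl fun j _ => ?_
  rw [TensorProduct.tmul_sum]
  refine Finset.sum_congr rfl fun q _ => ?_
  rw [hΨap]

/-! ### Associativity of `mbar` -/

lemma mbar_assoc
    (hm_comul : Coalgebra.comul ∘ₗ m
      = (TensorProduct.map m m) ∘ₗ (TensorProduct.tensorTensorTensorComm k H H H H).toLinearMap
          ∘ₗ (TensorProduct.map Coalgebra.comul Coalgebra.comul))
    (hΦ_comul : Coalgebra.comul ∘ₗ Φ = TensorProduct.map Φ Φ ∘ₗ Coalgebra.comul)
    (hcoc : ∀ a : H, (TensorProduct.comm k H H) (Coalgebra.comul (R := k) a)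
      = Coalgebra.comul a)
    (h3 : Φ ∘ₗ mbar k Φ m = mbar k Φ m ∘ₗ TensorProduct.map LinearMap.id Φ)
    (h4 : m ∘ₗ TensorProduct.map LinearMap.id m
      = m ∘ₗ TensorProduct.map (mbar k Φ m) LinearMap.id ∘ₗ
          (TensorProduct.assoc k H H H).symm.toLinearMap)
    (h5 : m ∘ₗ TensorProduct.map LinearMap.id (LinearMap.mul' k H)
      = (LinearMap.mul' k H) ∘ₗ TensorProduct.map m m ∘ₗ
          (TensorProduct.tensorTensorTensorComm k H H H H).toLinearMap ∘ₗ
          TensorProduct.map Coalgebra.comul LinearMap.id)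
    (a b c : H) :
    mbar k Φ m (mbar k Φ m (a ⊗ₜ[k] b) ⊗ₜ[k] c)
      = mbar k Φ m (a ⊗ₜ[k] mbar k Φ m (b ⊗ₜ[k] c)) := by
  classical
  set r := ℛ k a with hrd
  set rb := ℛ k b with hrbd
  set r1 : (i : r.ι) → Coalgebra.Repr k (r.left i) (H × H) := fun i => ℛ k (r.left i) with hr1
  set r2 : (i : r.ι) → Coalgebra.Repr k (r.right i) (H × H) := fun i => ℛ k (r.right i) with hr2
  set G : rb.ι → (H ⊗[k] (H ⊗[k] H)) →ₗ[k] H := fun p =>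
    LinearMap.mul' k H ∘ₗ TensorProduct.map Φ
      (LinearMap.mul' k H ∘ₗ TensorProduct.map
        (m ∘ₗ (TensorProduct.mk k H H).flip (Φ (rb.left p)))
        (m ∘ₗ (TensorProduct.mk k H H).flip c ∘ₗ (mbar k Φ m)
          ∘ₗ (TensorProduct.mk k H H).flip (rb.right p))) with hG
  have hGap : ∀ (p : rb.ι) (x y z : H), G p (x ⊗ₜ[k] (y ⊗ₜ[k] z))
      = Φ x * (m (y ⊗ₜ[k] Φ (rb.left p)) * m (mbar k Φ m (z ⊗ₜ[k] rb.right p) ⊗ₜ[k] c)) := by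
    intro p x y z; simp [hG]
  have key := Coalgebra.sum_tmul_tmul_eq (R := k) r r1 r2
  have hrep_eq : ∑ z ∈ r.index ×ˢ rb.index,
        mbar k Φ m (r.left z.1 ⊗ₜ[k] rb.left z.2) ⊗ₜ[k]
          mbar k Φ m (r.right z.1 ⊗ₜ[k] rb.right z.2)
      = Coalgebra.comul (R := k) (mbar k Φ m (a ⊗ₜ[k] b)) := by
    rw [comul_mbar m Φ hm_comul hΦ_comul hcoc a b r rb, Finset.sum_product]
  calc mbar k Φ m (mbar k Φ m (a ⊗ₜ[k] b) ⊗ₜ[k] c)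
      = ∑ z ∈ r.index ×ˢ rb.index,
          Φ (mbar k Φ m (r.left z.1 ⊗ₜ[k] rb.left z.2))
            * m (mbar k Φ m (r.right z.1 ⊗ₜ[k] rb.right z.2) ⊗ₜ[k] c) :=
        mbar_tmul m Φ _ c ⟨r.index ×ˢ rb.index,
          fun z => mbar k Φ m (r.left z.1 ⊗ₜ[k] rb.left z.2),
          fun z => mbar k Φ m (r.right z.1 ⊗ₜ[k] rb.right z.2), hrep_eq⟩
    _ = ∑ i ∈ r.index, ∑ p ∈ rb.index,
          mbar k Φ m (r.left i ⊗ₜ[k] Φ (rb.left p))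
            * m (mbar k Φ m (r.right i ⊗ₜ[k] rb.right p) ⊗ₜ[k] c) := by
        rw [Finset.sum_product]
        exact Finset.sum_congr rfl fun i _ => Finset.sum_congr rfl fun p _ => by
          rw [h3_pointwise m Φ h3]
    _ = ∑ p ∈ rb.index, ∑ i ∈ r.index, ∑ j ∈ (r1 i).index,
          G p ((r1 i).left j ⊗ₜ[k] ((r1 i).right j ⊗ₜ[k] r.right i)) := by
        rw [Finset.sum_comm]
        refine Finset.sum_congr rfl fun p _ => Finset.sum_congr rfl fun i _ => ?_
        rw [mbar_tmul m Φ (r.left i) (Φ (rb.left p)) (r1 i), Finset.sum_mul]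
        exact Finset.sum_congr rfl fun j _ => by rw [hGap, mul_assoc]
    _ = ∑ p ∈ rb.index, ∑ i ∈ r.index, ∑ q ∈ (r2 i).index,
          G p (r.left i ⊗ₜ[k] ((r2 i).left q ⊗ₜ[k] (r2 i).right q)) := by
        refine Finset.sum_congr rfl fun p _ => ?_
        have := congrArg (G p) key
        simpa only [map_sum] using this
    _ = ∑ i ∈ r.index, ∑ p ∈ rb.index, ∑ q ∈ (r2 i).index,
          Φ (r.left i) * (m ((r2 i).left q ⊗ₜ[k] Φ (rb.left p))
            * m (mbar k Φ m ((r2 i).right q ⊗ₜ[k] rb.right p) ⊗ₜ[k] c)) := by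
        rw [Finset.sum_comm]
        exact Finset.sum_congr rfl fun i _ => Finset.sum_congr rfl fun p _ =>
          Finset.sum_congr rfl fun q _ => by rw [hGap]
    _ = mbar k Φ m (a ⊗ₜ[k] mbar k Φ m (b ⊗ₜ[k] c)) := by
        rw [mbar_tmul m Φ a (mbar k Φ m (b ⊗ₜ[k] c)) r]
        refine Finset.sum_congr rfl fun i _ => ?_
        rw [mbar_tmul m Φ b c rb, TensorProduct.tmul_sum, map_sum, Finset.mul_sum]
        refine Finset.sum_congr rfl fun p _ => ?_
        rw [h5_pointwise m h5 (r.right i) (Φ (rb.left p)) (m (rb.right p ⊗ₜ[k] c)) (r2 i),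
          Finset.mul_sum]
        refine Finset.sum_congr rfl fun q _ => ?_
        rw [h4_pointwise m Φ h4]

/-! ### The antipode identities, pointwise -/

lemma hS_pt (S : H →ₗ[k] H)
    (hS : ∀ a : H, mbar k Φ m (TensorProduct.map LinearMap.id S (Coalgebra.comul a))
      = (Coalgebra.counit (R := k) a) • (1 : H))
    (x : H) (rx : Coalgebra.Repr k x ι) :
    ∑ i ∈ rx.index, mbar k Φ m (rx.left i ⊗ₜ[k] S (rx.right i))
      = counit (R := k) x • (1 : H) := by
  have h := hS x
  rw [← rx.eq, map_sum, map_sum] at h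
  simpa using h

lemma hSS_pt (S : H →ₗ[k] H)
    (hS : ∀ a : H, mbar k Φ m (TensorProduct.map LinearMap.id S (Coalgebra.comul a))
      = (Coalgebra.counit (R := k) a) • (1 : H))
    (hS_comul : Coalgebra.comul ∘ₗ S = TensorProduct.map S S ∘ₗ Coalgebra.comul)
    (hS_counit : Coalgebra.counit ∘ₗ S = Coalgebra.counit)
    (x : H) (rx : Coalgebra.Repr k x ι) :
    ∑ q ∈ rx.index, mbar k Φ m (S (rx.left q) ⊗ₜ[k] S (S (rx.right q)))
      = counit (R := k) x • (1 : H) := by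
  have h := hS (S x)
  have hc : Coalgebra.comul (R := k) (S x)
      = ∑ q ∈ rx.index, S (rx.left q) ⊗ₜ[k] S (rx.right q) := by
    have h2 := LinearMap.congr_fun hS_comul x
    simp only [LinearMap.comp_apply] at h2
    rw [h2, ← rx.eq, map_sum]
    simp
  have hε : counit (R := k) (S x) = counit (R := k) x := LinearMap.congr_fun hS_counit x
  rw [hc, map_sum, map_sum, hε] at h
  simpa using h

/-! ### The main computation -/

theorem final
    (hm_comul : Coalgebra.comul ∘ₗ m
      = (TensorProduct.map m m) ∘ₗ (TensorProduct.tensorTensorTensorComm k H H H H).toLinearMap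
          ∘ₗ (TensorProduct.map Coalgebra.comul Coalgebra.comul))
    (hm_counit : Coalgebra.counit ∘ₗ m
      = (TensorProduct.lid k k).toLinearMap ∘ₗ
          TensorProduct.map Coalgebra.counit Coalgebra.counit)
    (hΦ_comul : Coalgebra.comul ∘ₗ Φ = TensorProduct.map Φ Φ ∘ₗ Coalgebra.comul)
    (h3 : Φ ∘ₗ mbar k Φ m = mbar k Φ m ∘ₗ TensorProduct.map LinearMap.id Φ)
    (h4 : m ∘ₗ TensorProduct.map LinearMap.id m
      = m ∘ₗ TensorProduct.map (mbar k Φ m) LinearMap.id ∘ₗ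
          (TensorProduct.assoc k H H H).symm.toLinearMap)
    (h5 : m ∘ₗ TensorProduct.map LinearMap.id (LinearMap.mul' k H)
      = (LinearMap.mul' k H) ∘ₗ TensorProduct.map m m ∘ₗ
          (TensorProduct.tensorTensorTensorComm k H H H H).toLinearMap ∘ₗ
          TensorProduct.map Coalgebra.comul LinearMap.id)
    (hcoc : ∀ a : H, (TensorProduct.comm k H H) (Coalgebra.comul (R := k) a)
      = Coalgebra.comul a)
    (hmbar1 : ∀ a : H, mbar k Φ m ((1 : H) ⊗ₜ[k] a) = a)
    (S : H →ₗ[k] H)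
    (hS_comul : Coalgebra.comul ∘ₗ S = TensorProduct.map S S ∘ₗ Coalgebra.comul)
    (hS_counit : Coalgebra.counit ∘ₗ S = Coalgebra.counit)
    (hS : ∀ a : H, mbar k Φ m (TensorProduct.map LinearMap.id S (Coalgebra.comul a))
      = (Coalgebra.counit (R := k) a) • (1 : H))
    (a : H) : S (S a) = Φ a := by
  classical
  set r := ℛ k a with hrd
  set r1 : (i : r.ι) → Coalgebra.Repr k (r.left i) (H × H) := fun i => ℛ k (r.left i) with hr1
  set r2 : (i : r.ι) → Coalgebra.Repr k (r.right i) (H × H) := fun i => ℛ k (r.right i) with hr2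
  set K : H ⊗[k] (H ⊗[k] H) →ₗ[k] H :=
    mbar k Φ m ∘ₗ (LinearMap.lTensor H
      (mbar k Φ m ∘ₗ TensorProduct.map S (S ∘ₗ S))) with hK
  have hKap : ∀ x y z : H, K (x ⊗ₜ[k] (y ⊗ₜ[k] z))
      = mbar k Φ m (x ⊗ₜ[k] mbar k Φ m (S y ⊗ₜ[k] S (S z))) := by
    intro x y z; simp [hK]
  have key := Coalgebra.sum_tmul_tmul_eq (R := k) r r1 r2
  calc S (S a)
      = ∑ i ∈ r.index, counit (R := k) (r.left i) • S (S (r.right i)) := by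
        conv_lhs => rw [← sum_counit_smul (k := k) a r]
        rw [map_sum, map_sum]
        simp
    _ = ∑ i ∈ r.index,
          mbar k Φ m ((counit (R := k) (r.left i) • (1 : H)) ⊗ₜ[k] S (S (r.right i))) := by
        refine Finset.sum_congr rfl fun i _ => ?_
        rw [← TensorProduct.smul_tmul', map_smul, hmbar1]
    _ = ∑ i ∈ r.index, ∑ j ∈ (r1 i).index,
          mbar k Φ m (mbar k Φ m ((r1 i).left j ⊗ₜ[k] S ((r1 i).right j))
            ⊗ₜ[k] S (S (r.right i))) := by
        refine Finset.sum_congr rfl fun i _ => ?_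
        rw [← hS_pt m Φ S hS (r.left i) (r1 i), TensorProduct.sum_tmul, map_sum]
    _ = ∑ i ∈ r.index, ∑ j ∈ (r1 i).index,
          K ((r1 i).left j ⊗ₜ[k] ((r1 i).right j ⊗ₜ[k] r.right i)) := by
        refine Finset.sum_congr rfl fun i _ => Finset.sum_congr rfl fun j _ => ?_
        rw [mbar_assoc m Φ hm_comul hΦ_comul hcoc h3 h4 h5, hKap]
    _ = ∑ i ∈ r.index, ∑ q ∈ (r2 i).index,
          K (r.left i ⊗ₜ[k] ((r2 i).left q ⊗ₜ[k] (r2 i).right q)) := by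
        have := congrArg K key
        simpa only [map_sum] using this
    _ = ∑ i ∈ r.index,
          mbar k Φ m (r.left i ⊗ₜ[k] (counit (R := k) (r.right i) • (1 : H))) := by
        refine Finset.sum_congr rfl fun i _ => ?_
        rw [← hSS_pt m Φ S hS hS_comul hS_counit (r.right i) (r2 i), TensorProduct.tmul_sum,
          map_sum]
        exact Finset.sum_congr rfl fun q _ => hKap _ _ _
    _ = ∑ i ∈ r.index, counit (R := k) (r.right i) • Φ (r.left i) := by
        refine Finset.sum_congr rfl fun i _ => ?_
        rw [TensorProduct.tmul_smul, map_smul, mbar_one_right m Φ hm_comul hm_counit h5]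
    _ = Φ (∑ i ∈ r.index, counit (R := k) (r.right i) • r.left i) := by
        rw [map_sum]; simp
    _ = Φ a := by rw [sum_smul_counit]

end Stmt14Aux

theorem stmt14 (k H : Type*) [Field k] [Ring H] [HopfAlgebra k H]
    (m : H ⊗[k] H →ₗ[k] H) (Φ : H →ₗ[k] H)
    (hm_comul : Coalgebra.comul ∘ₗ m
      = (TensorProduct.map m m) ∘ₗ (TensorProduct.tensorTensorTensorComm k H H H H).toLinearMap
          ∘ₗ (TensorProduct.map Coalgebra.comul Coalgebra.comul))
    (hm_counit : Coalgebra.counit ∘ₗ m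
      = (TensorProduct.lid k k).toLinearMap ∘ₗ
          TensorProduct.map Coalgebra.counit Coalgebra.counit)
    (hΦ_comul : Coalgebra.comul ∘ₗ Φ = TensorProduct.map Φ Φ ∘ₗ Coalgebra.comul)
    (hΦ_counit : Coalgebra.counit ∘ₗ Φ = Coalgebra.counit)
    (h3 : Φ ∘ₗ mbar k Φ m = mbar k Φ m ∘ₗ TensorProduct.map LinearMap.id Φ)
    (h4 : m ∘ₗ TensorProduct.map LinearMap.id m
      = m ∘ₗ TensorProduct.map (mbar k Φ m) LinearMap.id ∘ₗ
          (TensorProduct.assoc k H H H).symm.toLinearMap)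
    (h5 : m ∘ₗ TensorProduct.map LinearMap.id (LinearMap.mul' k H)
      = (LinearMap.mul' k H) ∘ₗ TensorProduct.map m m ∘ₗ
          (TensorProduct.tensorTensorTensorComm k H H H H).toLinearMap ∘ₗ
          TensorProduct.map Coalgebra.comul LinearMap.id)
    (hcoc : ∀ a : H, (TensorProduct.comm k H H) (Coalgebra.comul (R := k) a)
      = Coalgebra.comul a)
    (hmbar1 : ∀ a : H, mbar k Φ m ((1 : H) ⊗ₜ[k] a) = a)
    (S : H →ₗ[k] H)
    (hS_comul : Coalgebra.comul ∘ₗ S = TensorProduct.map S S ∘ₗ Coalgebra.comul)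
    (hS_counit : Coalgebra.counit ∘ₗ S = Coalgebra.counit)
    (hS : ∀ a : H, mbar k Φ m (TensorProduct.map LinearMap.id S (Coalgebra.comul a))
      = (Coalgebra.counit (R := k) a) • (1 : H)) :
    ∀ a : H, S (S a) = Φ a := by
  intro a
  exact Stmt14Aux.final m Φ hm_comul hm_counit hΦ_comul h3 h4 h5 hcoc hmbar1
    S hS_comul hS_counit hS a
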